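/- The composite of precise morphisms is precise: if f : S → F R is F-precise and f' : R → F' Q is F'-precise, then F(f') ∘ f : S → F(F' Q) is (F ∘ F')-precise, where F ∘ F' denotes the composite functor X ↦ F(F' X). -/
import Mathlib


open CategoryTheory CategoryTheory.Limits

universe v u

variable {C : Type u} [Category.{v} C]

/-- A morphism `s : S ⟶ G.obj R` is `G`-precise if whenever `G h ∘ f = G g ∘ s`
there is a diagonal `d : R ⟶ A` with `G d ∘ s = f` and `h ∘ d = g`. -/
def Precise (G : C ⥤ C) {S R : C} (s : S ⟶ G.obj R) : Prop :=
  ∀ {A D : C} (f : S ⟶ G.obj A) (g : R ⟶ D) (h : A ⟶ D),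
    f ≫ G.map h = s ≫ G.map g → ∃ d : R ⟶ A, s ≫ G.map d = f ∧ d ≫ h = g

/-- The composite of precise morphisms is precise for the composite functor
`X ↦ F (F' X)` (which is `F' ⋙ F` in Mathlib's notation). -/
theorem precise_comp (F F' : C ⥤ C) {S R Q : C}
    (f : S ⟶ F.obj R) (f' : R ⟶ F'.obj Q)
    (hf : Precise F f) (hf' : Precise F' f') :
    Precise (F' ⋙ F) (show S ⟶ (F' ⋙ F).obj Q from f ≫ F.map f') := by
  intro A D g' g h hcomm
  obtain ⟨d, hd1, hd2⟩ := hf g' (f' ≫ F'.map g) (F'.map h) (by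
    simpa [Functor.map_comp, Category.assoc] using hcomm)
  obtain ⟨d', hd'1, hd'2⟩ := hf' d g h hd2
  exact ⟨d', by show (f ≫ F.map f') ≫ F.map (F'.map d') = g'; rw [Category.assoc, ← F.map_comp, hd'1, hd1], hd'2⟩
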